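/- The complex dimension of E ∩ E' is at most ½(dim_ℝ(C ∩ C') + e), where e := dim_ℝ V + dim_ℝ(C ∩ C') - dim_ℝ C - dim_ℝ C'. (Linear-algebraic, pointwise content of Proposition 5.1(1) of the paper.) -/

import Mathlib

open Submodule Module TensorProduct

def perpB {R V N : Type*} [CommRing R] [AddCommGroup V] [Module R V]
    [AddCommGroup N] [Module R N]
    (B : V →ₗ[R] V →ₗ[R] N) (W : Submodule R V) : Submodule R V where
  carrier := {v | ∀ w ∈ W, B v w = 0}
  add_mem' := by
    intro a b ha hb w hw
    simp only [Set.mem_setOf_eq] at ha hb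
    simp [ha w hw, hb w hw]
  zero_mem' := by
    intro w hw
    simp
  smul_mem' := by
    intro c a ha w hw
    simp only [Set.mem_setOf_eq] at ha
    simp [ha w hw]


noncomputable section AuxCplx

variable {M N : Type*} [AddCommGroup M] [Module ℝ M] [AddCommGroup N] [Module ℝ N]

/-- Real part of an element of `ℂ ⊗[ℝ] M`. -/
def reT (M : Type*) [AddCommGroup M] [Module ℝ M] : ℂ ⊗[ℝ] M →ₗ[ℝ] M :=
  TensorProduct.lift ((LinearMap.lsmul ℝ M).comp Complex.reLm)

def imT (M : Type*) [AddCommGroup M] [Module ℝ M] : ℂ ⊗[ℝ] M →ₗ[ℝ] M :=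
  TensorProduct.lift ((LinearMap.lsmul ℝ M).comp Complex.imLm)

@[simp] lemma reT_tmul (c : ℂ) (v : M) : reT M (c ⊗ₜ[ℝ] v) = c.re • v := rfl
@[simp] lemma imT_tmul (c : ℂ) (v : M) : imT M (c ⊗ₜ[ℝ] v) = c.im • v := rfl

/-- Conjugation on `ℂ ⊗[ℝ] M`. -/
def conjT (M : Type*) [AddCommGroup M] [Module ℝ M] : ℂ ⊗[ℝ] M →ₗ[ℝ] ℂ ⊗[ℝ] M :=
  LinearMap.rTensor M Complex.conjAe.toLinearMap

@[simp] lemma conjT_tmul (c : ℂ) (v : M) :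
    conjT M (c ⊗ₜ[ℝ] v) = (starRingEnd ℂ c) ⊗ₜ[ℝ] v := rfl

lemma conjT_conjT (u : ℂ ⊗[ℝ] M) : conjT M (conjT M u) = u := by
  induction u with
  | zero => simp
  | tmul c v => simp
  | add x y hx hy => simp [map_add, hx, hy]

lemma reT_conjT (u : ℂ ⊗[ℝ] M) : reT M (conjT M u) = reT M u := by
  induction u with
  | zero => simp
  | tmul c v => simp
  | add x y hx hy => simp [map_add, hx, hy]

lemma imT_conjT (u : ℂ ⊗[ℝ] M) : imT M (conjT M u) = - imT M u := by
  induction u with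
  | zero => simp
  | tmul c v => simp
  | add x y hx hy => simp [map_add, hx, hy]; abel

lemma reT_imT_recon (u : ℂ ⊗[ℝ] M) :
    (1 : ℂ) ⊗ₜ[ℝ] (reT M u) + Complex.I ⊗ₜ[ℝ] (imT M u) = u := by
  induction u with
  | zero => simp
  | tmul c v =>
      rw [reT_tmul, imT_tmul, tmul_smul, tmul_smul, smul_tmul', smul_tmul',
        ← add_tmul]
      congr 1
      simp [Complex.real_smul]
  | add x y hx hy =>
      rw [map_add, map_add, tmul_add, tmul_add]
      conv_rhs => rw [← hx, ← hy]
      abel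

lemma reT_eq_zero_imp (u : ℂ ⊗[ℝ] M) (h1 : reT M u = 0) (h2 : imT M u = 0) : u = 0 := by
  rw [← reT_imT_recon u, h1, h2]; simp

lemma reT_baseChange (f : M →ₗ[ℝ] N) (u : ℂ ⊗[ℝ] M) :
    reT N (LinearMap.baseChange ℂ f u) = f (reT M u) := by
  induction u with
  | zero => simp
  | tmul c v => simp
  | add x y hx hy => simp [map_add, hx, hy]

lemma imT_baseChange (f : M →ₗ[ℝ] N) (u : ℂ ⊗[ℝ] M) :
    imT N (LinearMap.baseChange ℂ f u) = f (imT M u) := by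
  induction u with
  | zero => simp
  | tmul c v => simp
  | add x y hx hy => simp [map_add, hx, hy]

lemma conjT_baseChange (f : M →ₗ[ℝ] N) (u : ℂ ⊗[ℝ] M) :
    conjT N (LinearMap.baseChange ℂ f u) = LinearMap.baseChange ℂ f (conjT M u) := by
  induction u with
  | zero => simp
  | tmul c v => simp
  | add x y hx hy => simp [map_add, hx, hy]

lemma baseChange_injective (f : M →ₗ[ℝ] N) (hf : Function.Injective f) :
    Function.Injective (LinearMap.baseChange ℂ f) := by
  intro a b h
  have h1 : reT N (LinearMap.baseChange ℂ f a) = reT N (LinearMap.baseChange ℂ f b) := by rw [h]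
  have h2 : imT N (LinearMap.baseChange ℂ f a) = imT N (LinearMap.baseChange ℂ f b) := by rw [h]
  rw [reT_baseChange, reT_baseChange] at h1
  rw [imT_baseChange, imT_baseChange] at h2
  have hr := hf h1
  have hi := hf h2
  rw [← reT_imT_recon a, ← reT_imT_recon b, hr, hi]

end AuxCplx

lemma mem_perpB {R V N : Type*} [CommRing R] [AddCommGroup V] [Module R V]
    [AddCommGroup N] [Module R N]
    (B : V →ₗ[R] V →ₗ[R] N) (W : Submodule R V) (v : V) :
    v ∈ perpB B W ↔ ∀ w ∈ W, B v w = 0 := Iff.rfl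

lemma mem_perp_of_mem_rad {V : Type*} [AddCommGroup V] [Module ℝ V]
    (ω : V →ₗ[ℝ] V →ₗ[ℝ] ℝ) (C : Submodule ℝ V)
    (Ω : ↥C →ₗ[ℝ] ↥C →ₗ[ℝ] ℂ) (hIm : ∀ u v : ↥C, (Ω u v).im = ω ↑u ↑v)
    (Ωc : (ℂ ⊗[ℝ] ↥C) →ₗ[ℂ] (ℂ ⊗[ℝ] ↥C) →ₗ[ℂ] ℂ)
    (hΩc : ∀ u v : ↥C, Ωc ((1 : ℂ) ⊗ₜ[ℝ] u) ((1 : ℂ) ⊗ₜ[ℝ] v) = Ω u v)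
    (u : ℂ ⊗[ℝ] V)
    (hu : u ∈ (perpB Ωc ⊤).map (LinearMap.baseChange ℂ C.subtype))
    (hcu : conjT V u ∈ (perpB Ωc ⊤).map (LinearMap.baseChange ℂ C.subtype)) :
    reT V u ∈ perpB ω C ∧ imT V u ∈ perpB ω C := by
  obtain ⟨t, ht, rfl⟩ := hu
  obtain ⟨s, hs, hscon⟩ := hcu
  have hinj : Function.Injective (LinearMap.baseChange ℂ C.subtype) :=
    baseChange_injective _ C.injective_subtype
  have hs' : s = conjT ↥C t := by
    apply hinj
    rw [hscon, conjT_baseChange]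
  subst hs'
  have key : ∀ w : ↥C, Ω (reT ↥C t) w = 0 ∧ Ω (imT ↥C t) w = 0 := by
    intro w
    have hrec := reT_imT_recon t
    set x := reT ↥C t with hx
    set y := imT ↥C t with hy
    have h1 : Ωc t ((1 : ℂ) ⊗ₜ[ℝ] w) = 0 := ht _ trivial
    have h2 : Ωc (conjT ↥C t) ((1 : ℂ) ⊗ₜ[ℝ] w) = 0 := hs _ trivial
    have hconj : conjT ↥C t = (1 : ℂ) ⊗ₜ[ℝ] x - Complex.I ⊗ₜ[ℝ] y := by
      conv_lhs => rw [← hrec]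
      rw [map_add, conjT_tmul, conjT_tmul]
      simp [sub_eq_add_neg, ← neg_tmul]
    have hIs : (Complex.I ⊗ₜ[ℝ] y : ℂ ⊗[ℝ] ↥C) = Complex.I • ((1 : ℂ) ⊗ₜ[ℝ] y) := by
      rw [smul_tmul']
      norm_num
    rw [← hrec] at h1
    rw [hconj] at h2
    rw [map_add, hIs, map_smul] at h1
    rw [map_sub, hIs, map_smul] at h2
    simp only [LinearMap.add_apply, LinearMap.sub_apply, LinearMap.smul_apply,
      smul_eq_mul, hΩc] at h1 h2
    have hyw : Ω y w = 0 := by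
      have h3 : (2 * Complex.I) * Ω y w = 0 := by linear_combination h1 - h2
      rcases mul_eq_zero.mp h3 with h | h
      · exfalso
        simp [Complex.ext_iff] at h
      · exact h
    constructor
    · linear_combination (h1 + h2) / 2
    · exact hyw
  constructor
  · rw [reT_baseChange]
    intro w hw
    have := key ⟨w, hw⟩
    have him := hIm (reT ↥C t) ⟨w, hw⟩
    rw [this.1] at him
    simpa using him.symm
  · rw [imT_baseChange]
    intro w hw
    have := key ⟨w, hw⟩
    have him := hIm (imT ↥C t) ⟨w, hw⟩
    rw [this.2] at him
    simpa using him.symm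

lemma finrank_perpB_add_le {V : Type*} [AddCommGroup V] [Module ℝ V]
    [FiniteDimensional ℝ V]
    (ω : V →ₗ[ℝ] V →ₗ[ℝ] ℝ) (hωnd : ∀ v : V, (∀ w : V, ω v w = 0) → v = 0)
    (S : Submodule ℝ V) :
    finrank ℝ (perpB ω S) + finrank ℝ S ≤ finrank ℝ V := by
  set g : V →ₗ[ℝ] Module.Dual ℝ ↥S := S.subtype.dualMap ∘ₗ ω with hg
  have hker : perpB ω S = LinearMap.ker g := by
    ext v
    rw [mem_perpB, LinearMap.mem_ker]
    constructor
    · intro h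
      ext s
      exact h s s.2
    · intro h w hw
      exact congrArg (fun f => f ⟨w, hw⟩) h
  have hωinj : Function.Injective (ω : V →ₗ[ℝ] Module.Dual ℝ V) := by
    intro a b hab
    have hsub : ω (a - b) = 0 := by rw [map_sub, hab, sub_self]
    have : a - b = 0 := by
      apply hωnd
      intro w
      rw [hsub]
      rfl
    exact sub_eq_zero.mp this
  have hωsurj : Function.Surjective (ω : V →ₗ[ℝ] Module.Dual ℝ V) :=
    (LinearMap.injective_iff_surjective_of_finrank_eq_finrank
      (Subspace.dual_finrank_eq).symm).mp hωinj
  have hsurj : Function.Surjective g :=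
    (LinearMap.dualMap_surjective_of_injective S.injective_subtype).comp hωsurj
  have hrn := LinearMap.finrank_range_add_finrank_ker g
  rw [LinearMap.range_eq_top.mpr hsurj, finrank_top] at hrn
  have hd : finrank ℝ (Module.Dual ℝ ↥S) = finrank ℝ ↥S := Subspace.dual_finrank_eq
  rw [hker]
  omega

theorem stmt_12 {V : Type*} [AddCommGroup V] [Module ℝ V] [FiniteDimensional ℝ V]
    (ω : V →ₗ[ℝ] V →ₗ[ℝ] ℝ) (hωalt : ∀ v : V, ω v v = 0)
    (hωnd : ∀ v : V, (∀ w : V, ω v w = 0) → v = 0)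
    (C C' : Submodule ℝ V) (hC : perpB ω C ≤ C) (hC' : perpB ω C' ≤ C')
    (Ω : ↥C →ₗ[ℝ] ↥C →ₗ[ℝ] ℂ) (hAlt : ∀ v : ↥C, Ω v v = 0)
    (hIm : ∀ u v : ↥C, (Ω u v).im = ω ↑u ↑v)
    (Ω' : ↥C' →ₗ[ℝ] ↥C' →ₗ[ℝ] ℂ) (hAlt' : ∀ v : ↥C', Ω' v v = 0)
    (hIm' : ∀ u v : ↥C', (Ω' u v).im = ω ↑u ↑v)
    (hcomp : ∃ (Ωq : (↥C ⧸ perpB Ω ⊤) →ₗ[ℝ] (↥C ⧸ perpB Ω ⊤) →ₗ[ℝ] ℂ)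
        (I : (↥C ⧸ perpB Ω ⊤) →ₗ[ℝ] (↥C ⧸ perpB Ω ⊤)),
        (∀ u v : ↥C, Ωq ((perpB Ω ⊤).mkQ u) ((perpB Ω ⊤).mkQ v) = Ω u v) ∧
        (∀ q, I (I q) = -q) ∧ (∀ u v, (Ωq u v).re = (Ωq (I u) v).im))
    (hcomp' : ∃ (Ωq' : (↥C' ⧸ perpB Ω' ⊤) →ₗ[ℝ] (↥C' ⧸ perpB Ω' ⊤) →ₗ[ℝ] ℂ)
        (I' : (↥C' ⧸ perpB Ω' ⊤) →ₗ[ℝ] (↥C' ⧸ perpB Ω' ⊤)),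
        (∀ u v : ↥C', Ωq' ((perpB Ω' ⊤).mkQ u) ((perpB Ω' ⊤).mkQ v) = Ω' u v) ∧
        (∀ q, I' (I' q) = -q) ∧ (∀ u v, (Ωq' u v).re = (Ωq' (I' u) v).im))
    (Ωc : (ℂ ⊗[ℝ] ↥C) →ₗ[ℂ] (ℂ ⊗[ℝ] ↥C) →ₗ[ℂ] ℂ)
    (hΩc : ∀ u v : ↥C, Ωc ((1 : ℂ) ⊗ₜ[ℝ] u) ((1 : ℂ) ⊗ₜ[ℝ] v) = Ω u v)
    (Ωc' : (ℂ ⊗[ℝ] ↥C') →ₗ[ℂ] (ℂ ⊗[ℝ] ↥C') →ₗ[ℂ] ℂ)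
    (hΩc' : ∀ u v : ↥C', Ωc' ((1 : ℂ) ⊗ₜ[ℝ] u) ((1 : ℂ) ⊗ₜ[ℝ] v) = Ω' u v) :
    2 * finrank ℂ ↥((perpB Ωc ⊤).map (LinearMap.baseChange ℂ C.subtype)
        ⊓ (perpB Ωc' ⊤).map (LinearMap.baseChange ℂ C'.subtype))
      ≤ finrank ℝ ↥(C ⊓ C')
        + (finrank ℝ V + finrank ℝ ↥(C ⊓ C') - finrank ℝ ↥C - finrank ℝ ↥C') := by
  classical
  haveI : FiniteDimensional ℝ (ℂ ⊗[ℝ] V) := Module.Finite.trans ℂ (ℂ ⊗[ℝ] V)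
  set E : Submodule ℂ (ℂ ⊗[ℝ] V) :=
    (perpB Ωc ⊤).map (LinearMap.baseChange ℂ C.subtype) with hE
  set E' : Submodule ℂ (ℂ ⊗[ℝ] V) :=
    (perpB Ωc' ⊤).map (LinearMap.baseChange ℂ C'.subtype) with hE'
  set Wc : Submodule ℂ (ℂ ⊗[ℝ] V) := E ⊓ E' with hWc
  -- the real/imaginary parts map
  set Φ : ℂ ⊗[ℝ] V →ₗ[ℝ] V × V := (reT V).prod (imT V) with hΦ
  have hΦinj : Function.Injective Φ := by
    intro a b h
    have h1 : reT V a = reT V b := congrArg Prod.fst h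
    have h2 : imT V a = imT V b := congrArg Prod.snd h
    rw [← reT_imT_recon a, ← reT_imT_recon b, h1, h2]
  have hcomap : ∀ S : Submodule ℝ V,
      finrank ℝ ↥(Submodule.comap Φ (S.prod S)) ≤ 2 * finrank ℝ ↥S := by
    intro S
    have e1 : finrank ℝ ↥(Submodule.comap Φ (S.prod S))
        = finrank ℝ ↥((Submodule.comap Φ (S.prod S)).map Φ) :=
      (Submodule.equivMapOfInjective Φ hΦinj _).finrank_eq
    have e2 : finrank ℝ ↥((Submodule.comap Φ (S.prod S)).map Φ)
        ≤ finrank ℝ ↥(S.prod S) :=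
      Submodule.finrank_mono (Submodule.map_comap_le _ _)
    have e3 : finrank ℝ ↥(S.prod S) ≤ 2 * finrank ℝ ↥S := by
      rw [LinearMap.prod_eq_sup_map]
      have hsi := Submodule.finrank_sup_add_finrank_inf_eq
        (S.map (LinearMap.inl ℝ V V)) (S.map (LinearMap.inr ℝ V V))
      have l1 := Submodule.finrank_map_le (LinearMap.inl ℝ V V) S
      have l2 := Submodule.finrank_map_le (LinearMap.inr ℝ V V) S
      omega
    omega
  -- conjugation as a real-linear equivalence
  set J : ℂ ⊗[ℝ] V ≃ₗ[ℝ] ℂ ⊗[ℝ] V :=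
    LinearEquiv.ofLinear (conjT V) (conjT V)
      (LinearMap.ext (conjT_conjT (M := V))) (LinearMap.ext (conjT_conjT (M := V))) with hJ
  have hJapp : ∀ u : ℂ ⊗[ℝ] V, J u = conjT V u := fun u => rfl
  set A : Submodule ℝ (ℂ ⊗[ℝ] V) := Wc.restrictScalars ℝ with hA
  set B : Submodule ℝ (ℂ ⊗[ℝ] V) := A.map (J : ℂ ⊗[ℝ] V →ₗ[ℝ] ℂ ⊗[ℝ] V) with hB
  have hBA : finrank ℝ ↥B = finrank ℝ ↥A := LinearEquiv.finrank_map_eq J A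
  -- membership facts
  have hmemE : ∀ u ∈ E, reT V u ∈ C ∧ imT V u ∈ C := by
    rintro u ⟨t, ht, rfl⟩
    rw [reT_baseChange, imT_baseChange]
    exact ⟨(reT ↥C t).2, (imT ↥C t).2⟩
  have hmemE' : ∀ u ∈ E', reT V u ∈ C' ∧ imT V u ∈ C' := by
    rintro u ⟨t, ht, rfl⟩
    rw [reT_baseChange, imT_baseChange]
    exact ⟨(reT ↥C' t).2, (imT ↥C' t).2⟩
  set P : Submodule ℝ V := perpB ω C ⊓ perpB ω C' with hP
  have hrad : ∀ u ∈ Wc, conjT V u ∈ Wc → reT V u ∈ P ∧ imT V u ∈ P := by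
    intro u hu hcu
    have k1 := mem_perp_of_mem_rad ω C Ω hIm Ωc hΩc u hu.1 hcu.1
    have k2 := mem_perp_of_mem_rad ω C' Ω' hIm' Ωc' hΩc' u hu.2 hcu.2
    exact ⟨⟨k1.1, k2.1⟩, ⟨k1.2, k2.2⟩⟩
  -- sup bound
  have hsup : A ⊔ B ≤ Submodule.comap Φ ((C ⊓ C').prod (C ⊓ C')) := by
    apply sup_le
    · intro u hu
      have hu' : u ∈ Wc := hu
      have m1 := hmemE u hu'.1
      have m2 := hmemE' u hu'.2
      simp only [Submodule.mem_comap, hΦ, LinearMap.prod_apply, Pi.prod,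
        Submodule.mem_prod]
      exact ⟨⟨m1.1, m2.1⟩, ⟨m1.2, m2.2⟩⟩
    · rintro _ ⟨w, hw, rfl⟩
      have hw' : w ∈ Wc := hw
      have m1 := hmemE w hw'.1
      have m2 := hmemE' w hw'.2
      simp only [Submodule.mem_comap, hΦ, LinearMap.prod_apply, Pi.prod,
        Submodule.mem_prod, LinearEquiv.coe_coe, hJapp, Function.prod, reT_conjT, imT_conjT]
      exact ⟨⟨m1.1, m2.1⟩, ⟨neg_mem m1.2, neg_mem m2.2⟩⟩
  -- inf bound
  have hinf : A ⊓ B ≤ Submodule.comap Φ (P.prod P) := by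
    rintro u ⟨huA, huB⟩
    have hu : u ∈ Wc := huA
    obtain ⟨w, hw, hwu⟩ := huB
    have hw' : w ∈ Wc := hw
    have hcu : conjT V u ∈ Wc := by
      have : conjT V u = w := by
        rw [← hwu, LinearEquiv.coe_coe, hJapp, conjT_conjT]
      rw [this]
      exact hw'
    have := hrad u hu hcu
    simp only [Submodule.mem_comap, hΦ, LinearMap.prod_apply, Pi.prod,
      Submodule.mem_prod]
    exact this
  -- dimension bookkeeping
  have h1 : finrank ℝ ↥(A ⊔ B) + finrank ℝ ↥(A ⊓ B) = finrank ℝ ↥A + finrank ℝ ↥B :=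
    Submodule.finrank_sup_add_finrank_inf_eq A B
  have h2 : finrank ℝ ↥(A ⊔ B) ≤ 2 * finrank ℝ ↥(C ⊓ C') :=
    le_trans (Submodule.finrank_mono hsup) (hcomap _)
  have h3 : finrank ℝ ↥(A ⊓ B) ≤ 2 * finrank ℝ ↥P :=
    le_trans (Submodule.finrank_mono hinf) (hcomap _)
  have h4 : finrank ℝ ↥A = 2 * finrank ℂ ↥Wc := by
    have hm := Module.finrank_mul_finrank ℝ ℂ ↥Wc
    rw [Complex.finrank_real_complex] at hm
    rw [hm, hA]
    exact ((Submodule.restrictScalarsEquiv ℝ ℂ (ℂ ⊗[ℝ] V) Wc).restrictScalars ℝ).finrank_eq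
  -- bound on P
  have hPperp : P ≤ perpB ω (C ⊔ C') := by
    intro v hv w hw
    obtain ⟨a, ha, b, hb, rfl⟩ := Submodule.mem_sup.mp hw
    rw [map_add, hv.1 a ha, hv.2 b hb, add_zero]
  have hPle : finrank ℝ ↥P + finrank ℝ ↥(C ⊔ C') ≤ finrank ℝ V := by
    have := finrank_perpB_add_le ω hωnd (C ⊔ C')
    have := Submodule.finrank_mono hPperp
    omega
  have hsupinf : finrank ℝ ↥(C ⊔ C') + finrank ℝ ↥(C ⊓ C')
      = finrank ℝ ↥C + finrank ℝ ↥C' :=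
    Submodule.finrank_sup_add_finrank_inf_eq C C'
  omega
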